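/- Inductive Scheduling induction step: let k : Fin M → ℕ with k i ≥ 2 for all i, and let m be an index with k m ≤ k i for all i. Define the reduced vector k' on the remaining tasks {i : Fin M // i ≠ m} by k' i = k i − ⌈k i / k m⌉. If k' is pinwheel-schedulable, then k is pinwheel-schedulable; moreover, there exists a schedule satisfying k which is regular with respect to m, i.e., in which task m is scheduled exactly at the slots 0, k m, 2·k m, 3·k m, … . -/
import Mathlib

private lemma aux_g_spec (p : ℕ) (hp : 2 ≤ p) (n : ℕ) :
    ¬ p ∣ (n + n/(p-1) + 1) ∧ (n + n/(p-1) + 1) - (n + n/(p-1) + 1)/p - 1 = n := by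
  have hq : 0 < p - 1 := by omega
  set q := p - 1 with hqdef
  set d := n / q with hd
  set r := n % q with hr
  have h1 : q * d + r = n := Nat.div_add_mod n q
  have h2 : r < q := Nat.mod_lt _ hq
  have hpq : p = q + 1 := by omega
  have hpd : p * d = q * d + d := by rw [hpq]; ring
  have hg : n + d + 1 = p * d + (r + 1) := by omega
  have hdiv : (n + d + 1) / p = d := by
    rw [hg, Nat.mul_add_div (by omega), Nat.div_eq_of_lt (by omega)]; omega
  have hmod : (n + d + 1) % p = r + 1 := by
    rw [hg, Nat.mul_add_mod, Nat.mod_eq_of_lt (by omega)]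
  constructor
  · intro hdvd
    have : (n + d + 1) % p = 0 := Nat.mod_eq_zero_of_dvd hdvd
    omega
  · rw [hdiv]; omega

private lemma aux_g_f (p : ℕ) (hp : 2 ≤ p) (s : ℕ) (hs : ¬ p ∣ s) :
    (s - s/p - 1) + (s - s/p - 1)/(p-1) + 1 = s := by
  have hq : 0 < p - 1 := by omega
  set Q := s / p with hQ
  set r := s % p with hr
  have h1 : p * Q + r = s := Nat.div_add_mod s p
  have h2 : r < p := Nat.mod_lt _ (by omega)
  have h3 : 1 ≤ r := by
    rcases Nat.eq_zero_or_pos r with h | h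
    · exact absurd (Nat.dvd_of_mod_eq_zero h) hs
    · exact h
  have hmul : (p-1) * Q + Q = p * Q := by
    have hpq : p = (p-1) + 1 := by omega
    nth_rewrite 2 [hpq]
    ring
  have hfs : s - s/p - 1 = (p-1) * Q + (r - 1) := by omega
  rw [hfs, Nat.mul_add_div hq, Nat.div_eq_of_lt (by omega)]
  omega

private lemma aux_g_formula (p : ℕ) (hp : 2 ≤ p) (t' : ℕ) (ht' : ¬ p ∣ t') (d : ℕ) :
    ((t' - t'/p - 1) + d) + ((t' - t'/p - 1) + d)/(p-1) + 1
      = t' + d + (t' % p - 1 + d)/(p-1) := by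
  have hq : 0 < p - 1 := by omega
  set Q := t' / p with hQ
  set r := t' % p with hr
  have h1 : p * Q + r = t' := Nat.div_add_mod t' p
  have h2 : r < p := Nat.mod_lt _ (by omega)
  have h3 : 1 ≤ r := by
    rcases Nat.eq_zero_or_pos r with h | h
    · exact absurd (Nat.dvd_of_mod_eq_zero h) ht'
    · exact h
  have hmul : (p-1) * Q + Q = p * Q := by
    have hpq : p = (p-1) + 1 := by omega
    nth_rewrite 2 [hpq]
    ring
  have hfs : (t' - t'/p - 1) + d = (p-1) * Q + (r - 1 + d) := by omega
  rw [hfs, Nat.mul_add_div hq]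
  omega

/-- Inductive Scheduling induction step: let `k : Fin M → ℕ` with
`k i ≥ 2` for all `i`, and `m` an index of minimum value (`k m ≤ k i` for all `i`).
Let the reduced vector on the remaining tasks be `k' i = k i − ⌈k i / k m⌉`.
If the reduced vector is pinwheel-schedulable, then `k` is pinwheel-schedulable,
and moreover there is a satisfying schedule which is regular with respect to `m`,
i.e. task `m` is scheduled exactly at the slots `0, k m, 2·k m, …`. -/
theorem inductive_scheduling_step (M : ℕ) (k : Fin M → ℕ) (hk : ∀ i, 2 ≤ k i)
    (m : Fin M) (hm : ∀ i, k m ≤ k i)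
    (ck : Fin M → ℕ) (hck : ∀ i, (ck i : ℤ) = ⌈(k i : ℚ) / (k m : ℚ)⌉)
    (hsched : ∃ σ' : ℕ → Option {i : Fin M // i ≠ m},
      ∀ (i : {i : Fin M // i ≠ m}) (t : ℕ),
        ∃ s, t ≤ s ∧ s < t + (k i.val - ck i.val) ∧ σ' s = some i) :
    ∃ σ : ℕ → Option (Fin M),
      (∀ (i : Fin M) (t : ℕ), ∃ s, t ≤ s ∧ s < t + k i ∧ σ s = some i) ∧
      (∀ t : ℕ, σ t = some m ↔ k m ∣ t) := by
  classical
  obtain ⟨σ', hσ'⟩ := hsched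
  have hp2 : 2 ≤ k m := hk m
  have hq : 0 < k m - 1 := by omega
  refine ⟨fun t => if k m ∣ t then some m
      else (σ' (t - t/(k m) - 1)).map Subtype.val, ?_, ?_⟩
  · intro i t
    by_cases him : i = m
    · -- i = m : find a multiple of k m in the window
      subst him
      have h1 : k i * (t / k i) + t % k i = t := Nat.div_add_mod t (k i)
      have h2 : t % k i < k i := Nat.mod_lt _ (by omega)
      by_cases h : k i ∣ t
      · exact ⟨t, le_rfl, by omega, if_pos h⟩
      · have h3 : 1 ≤ t % k i := by
          rcases Nat.eq_zero_or_pos (t % k i) with h' | h'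
          · exact absurd (Nat.dvd_of_mod_eq_zero h') h
          · exact h'
        have hdvd : k i ∣ k i * (t / k i) + k i := dvd_add (dvd_mul_right _ _) dvd_rfl
        exact ⟨k i * (t / k i) + k i, by omega, by omega, if_pos hdvd⟩
    · -- i ≠ m
      have hLc : k i ≤ ck i * k m := by
        have h1 : (k i : ℚ) / (k m : ℚ) ≤ ((ck i : ℤ) : ℚ) :=
          Int.ceil_le.mp (le_of_eq (hck i).symm)
        have hkm0 : (0:ℚ) < (k m : ℚ) := by exact_mod_cast (by omega : 0 < k m)
        have h2 := (div_le_iff₀ hkm0).mp h1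
        exact_mod_cast h2
      set t' := if k m ∣ t then t + 1 else t with ht'def
      have ht'nd : ¬ k m ∣ t' := by
        rw [ht'def]
        split_ifs with h
        · intro hd
          have h1 : k m ∣ 1 := by
            have := Nat.dvd_sub hd h
            simpa using this
          have := Nat.le_of_dvd (by omega) h1
          omega
        · exact h
      have ht't : t ≤ t' ∧ t' ≤ t + 1 := by rw [ht'def]; split_ifs <;> omega
      obtain ⟨s', hs'1, hs'2, hs'3⟩ := hσ' ⟨i, him⟩ (t' - t'/(k m) - 1)
      have hs'2' : s' < (t' - t'/(k m) - 1) + (k i - ck i) := hs'2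
      obtain ⟨hsnd, hsf⟩ := aux_g_spec (k m) hp2 s'
      refine ⟨s' + s'/(k m - 1) + 1, ?_, ?_, ?_⟩
      · -- t ≤ s
        have hmono : (t' - t'/(k m) - 1) + (t' - t'/(k m) - 1)/(k m - 1) + 1
            ≤ s' + s'/(k m - 1) + 1 :=
          add_le_add (add_le_add hs'1 (Nat.div_le_div_right hs'1)) le_rfl
        have := aux_g_f (k m) hp2 t' ht'nd
        omega
      · -- s < t + k i
        set d := s' - (t' - t'/(k m) - 1) with hddef
        have hseq : s' = (t' - t'/(k m) - 1) + d := by omega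
        have hform := aux_g_formula (k m) hp2 t' ht'nd d
        rw [← hseq] at hform
        have hsplit : ck i * k m = ck i * (k m - 1) + ck i := by
          have hpq : k m = (k m - 1) + 1 := by omega
          nth_rewrite 1 [hpq]
          ring
        have hsucc : (ck i + 1) * (k m - 1) = ck i * (k m - 1) + (k m - 1) := by ring
        by_cases h : k m ∣ t
        · -- t' = t + 1, t' % k m = 1
          have ht'eq : t' = t + 1 := by rw [ht'def, if_pos h]
          obtain ⟨u, hu⟩ := h
          have hr : t' % k m = 1 := by
            have h1 : t' = k m * u + 1 := by rw [ht'eq, hu]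
            rw [h1, Nat.mul_add_mod, Nat.mod_eq_of_lt (by omega)]
          rw [hr] at hform
          norm_num at hform
          have hdb : d / (k m - 1) < ck i := by
            rw [Nat.div_lt_iff_lt_mul hq]
            omega
          omega
        · -- t' = t
          have ht'eq : t' = t := by rw [ht'def, if_neg h]
          have hr1 : 1 ≤ t' % k m := by
            rcases Nat.eq_zero_or_pos (t' % k m) with h' | h'
            · exact absurd (Nat.dvd_of_mod_eq_zero h') ht'nd
            · exact h'
          have hr2 : t' % k m < k m := Nat.mod_lt _ (by omega)
          have hdb : (t' % k m - 1 + d) / (k m - 1) < ck i + 1 := by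
            rw [Nat.div_lt_iff_lt_mul hq]
            omega
          omega
      · -- σ s = some i
        show (if k m ∣ (s' + s'/(k m - 1) + 1) then some m
            else (σ' ((s' + s'/(k m - 1) + 1) - (s' + s'/(k m - 1) + 1)/(k m) - 1)).map
              Subtype.val) = some i
        rw [if_neg hsnd, hsf, hs'3, Option.map_some]
  · intro t
    by_cases h : k m ∣ t
    · simp [h]
    · simp only [if_neg h]
      constructor
      · intro hmap
        rw [Option.map_eq_some_iff] at hmap
        obtain ⟨x, -, hx⟩ := hmap
        exact absurd hx x.2
      · intro hd
        exact absurd hd h
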